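/- Let r > 0 and let p₁=(ζ₁,v₁) ≠ p₂=(ζ₂,v₂) be points of the quaternionic Heisenberg group 𝓗 lying on the Cygan sphere of radius r centered at the origin (i.e. |ζ_j|⁴+|v_j|² = r⁴ for j=1,2), with v₁ = v₂. If equality ρ₀(p₁,p₂)² = ((|ζ₁|²+|ζ₂|²)² + |v₁−v₂|²)^{1/2} + 2|ζ₁|·|ζ₂| holds, then ζ₁ = −ζ₂. -/

import Mathlib

open Quaternion Real

noncomputable section

/-- The Cygan distance on the quaternionic Heisenberg group `𝓗 = ℍ × Im ℍ`:
`ρ₀((ζ₁,v₁),(ζ₂,v₂)) = | |ζ₁−ζ₂|² + v₁−v₂−2·Im(ζ̄₂ζ₁) |^{1/2}`, the outer `|·|`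
being the quaternionic norm. -/
def cygan (ζ₁ v₁ ζ₂ v₂ : ℍ) : ℝ :=
  Real.sqrt ‖((‖ζ₁ - ζ₂‖ ^ 2 : ℝ) : ℍ) + v₁ - v₂ - 2 * (star ζ₂ * ζ₁).im‖

set_option maxHeartbeats 1000000 in
/-- If two distinct points of a Cygan sphere about the origin have the
same vertical coordinate and realize equality in the Cygan distance estimate, then
`ζ₁ = −ζ₂`. -/
theorem cygan_eq_on_sphere_same_height
    (r : ℝ) (hr : 0 < r)
    (ζ₁ v₁ ζ₂ v₂ : ℍ) (hv₁ : v₁.re = 0) (hv₂ : v₂.re = 0)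
    (hs₁ : ‖ζ₁‖ ^ 4 + ‖v₁‖ ^ 2 = r ^ 4) (hs₂ : ‖ζ₂‖ ^ 4 + ‖v₂‖ ^ 2 = r ^ 4)
    (hne : (ζ₁, v₁) ≠ (ζ₂, v₂)) (hv : v₁ = v₂)
    (heq : cygan ζ₁ v₁ ζ₂ v₂ ^ 2 =
      Real.sqrt ((‖ζ₁‖ ^ 2 + ‖ζ₂‖ ^ 2) ^ 2 + ‖v₁ - v₂‖ ^ 2) + 2 * ‖ζ₁‖ * ‖ζ₂‖) :
    ζ₁ = -ζ₂ := by
  subst hv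
  have hn2 : ∀ x : ℍ, ‖x‖ ^ 2 = Quaternion.normSq x := fun x => by
    rw [sq, ← Quaternion.normSq_eq_norm_mul_self]
  -- equal norms from the sphere conditions
  have hnn : ‖ζ₁‖ = ‖ζ₂‖ := by
    have h4 : ‖ζ₁‖ ^ 4 = ‖ζ₂‖ ^ 4 := by linarith
    exact (pow_left_strictMonoOn₀ (n := 4) (by norm_num)).injOn
      (norm_nonneg ζ₁) (norm_nonneg ζ₂) h4
  set q : ℍ := star ζ₂ * ζ₁ with hq
  set S : ℝ := ‖ζ₁‖ ^ 2 + ‖ζ₂‖ ^ 2 with hS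
  have hS0 : 0 ≤ S := by positivity
  have hsub : ‖ζ₁ - ζ₂‖ ^ 2 = S - 2 * q.re := by
    rw [hS, hn2, hn2, hn2]
    simp only [hq, Quaternion.normSq_def', Quaternion.re_sub, Quaternion.imI_sub,
      Quaternion.imJ_sub, Quaternion.imK_sub, Quaternion.re_mul, Quaternion.re_star,
      Quaternion.imI_star, Quaternion.imJ_star, Quaternion.imK_star]
    ring
  have hX : ((‖ζ₁ - ζ₂‖ ^ 2 : ℝ) : ℍ) + v₁ - v₁ - 2 * q.im = (S : ℍ) - 2 * q := by
    have hd : (S : ℍ) - 2 * q = ((S - 2 * q.re : ℝ) : ℍ) - 2 * q.im := by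
      have h2 : ((2:ℝ):ℍ) = 2 := by norm_cast
      push_cast [h2]
      nth_rewrite 1 [← Quaternion.re_add_im q]
      noncomm_ring
    rw [hsub, hd]
    abel
  have hcy : cygan ζ₁ v₁ ζ₂ v₁ ^ 2 = ‖(S : ℍ) - 2 * q‖ := by
    rw [cygan, hX, Real.sq_sqrt (norm_nonneg _)]
  have hnq : ‖q‖ = ‖ζ₁‖ * ‖ζ₂‖ := by
    rw [hq, norm_mul, Quaternion.norm_star, mul_comm]
  have hE : ‖(S : ℍ) - 2 * q‖ = S + 2 * ‖q‖ := by
    rw [← hcy, heq, hnq]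
    simp [Real.sqrt_sq hS0, mul_assoc]
  have hNS : ‖(S : ℍ) - 2 * q‖ ^ 2 = S ^ 2 - 4 * S * q.re + 4 * ‖q‖ ^ 2 := by
    rw [hn2, hn2, two_mul]
    simp only [Quaternion.normSq_def', Quaternion.re_sub, Quaternion.imI_sub,
      Quaternion.imJ_sub, Quaternion.imK_sub, Quaternion.re_add, Quaternion.imI_add,
      Quaternion.imJ_add, Quaternion.imK_add, Quaternion.re_coe, Quaternion.imI_coe,
      Quaternion.imJ_coe, Quaternion.imK_coe]
    ring
  have hkey : S * (q.re + ‖q‖) = 0 := by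
    have h2 : ‖(S : ℍ) - 2 * q‖ ^ 2 = (S + 2 * ‖q‖) ^ 2 := by rw [hE]
    rw [hNS] at h2
    nlinarith [h2]
  rcases mul_eq_zero.1 hkey with h0 | h0
  · have h1 : ‖ζ₁‖ = 0 := by nlinarith [sq_nonneg ‖ζ₁‖, sq_nonneg ‖ζ₂‖, norm_nonneg ζ₁]
    have h2 : ‖ζ₂‖ = 0 := by rw [← hnn]; exact h1
    rw [norm_eq_zero] at h1 h2
    simp [h1, h2]
  · have ha : q.re = -(‖ζ₁‖ * ‖ζ₂‖) := by rw [← hnq]; linarith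
    have hzero : Quaternion.normSq (ζ₁ + ζ₂) = 0 := by
      have hexp : Quaternion.normSq (ζ₁ + ζ₂) = ‖ζ₁‖ ^ 2 + ‖ζ₂‖ ^ 2 + 2 * q.re := by
        rw [hn2, hn2]
        simp only [hq, Quaternion.normSq_def', Quaternion.re_add, Quaternion.imI_add,
          Quaternion.imJ_add, Quaternion.imK_add, Quaternion.re_mul, Quaternion.re_star,
          Quaternion.imI_star, Quaternion.imJ_star, Quaternion.imK_star]
        ring
      rw [hexp, ha, hnn]
      ring
    have hz2 : ζ₁ + ζ₂ = 0 := Quaternion.normSq_eq_zero.1 hzero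
    exact eq_neg_of_add_eq_zero_left hz2
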